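/- In the pair-HMM with parameter θ in Θ_0 (all transition probabilities and all emission probabilities strictly positive), the auxiliary process W_{s,t} = max_{e∈E} log P(X_{N_s+1:N_t}, Y_{M_s+1:M_t} | ε_{s+1}=e) + log δ_θ, where δ_θ = min_{e,e'} π(e,e') > 0, is superadditive: W_{0,t} ≥ W_{0,s} + W_{s,t} for all 0 ≤ s < t. -/

import Mathlib

open Finset Filter MeasureTheory
open scoped Classical

noncomputable section

/-- Hidden state space: 0 = horizontal step (1,0), 1 = vertical step (0,1), 2 = diagonal step (1,1). -/
abbrev E : Type := Fin 3

/-- The lattice step associated with each hidden state. -/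
def stepv : E → ℕ × ℕ := ![(1,0), (0,1), (1,1)]

/-- Number of X-letters emitted by the first `t` hidden steps. -/
def Nn (u : ℕ → E) (t : ℕ) : ℕ := ∑ i ∈ Finset.range t, (stepv (u i)).1

/-- Number of Y-letters emitted by the first `t` hidden steps. -/
def Mm (u : ℕ → E) (t : ℕ) : ℕ := ∑ i ∈ Finset.range t, (stepv (u i)).2

/-- Extend a finite hidden path to an infinite one (junk value 0 beyond `l`). -/
def extPath {l : ℕ} (u : Fin l → E) : ℕ → E := fun i => if h : i < l then u ⟨i, h⟩ else 0

/-- Conditional probability of the emitted letters for hidden steps `s, …, t-1`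
(0-indexed) along path `u`, with observation streams `x` and `y` (0-indexed). -/
def emit {A : Type} (f g : A → ℝ) (h : A → A → ℝ) (x y : ℕ → A) (u : ℕ → E) (s t : ℕ) : ℝ :=
  ∏ i ∈ Finset.Ico s t,
    if u i = 0 then f (x (Nn u i))
    else if u i = 1 then g (y (Mm u i))
    else h (x (Nn u i)) (y (Mm u i))

/-- Probability of a finite hidden path under initial law `mu` and transition matrix `pr`. -/
def pathProb (pr : E → E → ℝ) (mu : E → ℝ) {l : ℕ} (u : Fin l → E) : ℝ :=
  mu (extPath u 0) * ∏ i ∈ Finset.range (l - 1), pr (extPath u i) (extPath u (i + 1))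

/-- `P_θ(ε_{1:t} ∈ E_{n,m} with |path| = t, X_{1:n} = x, Y_{1:m} = y)`:
joint probability of a hidden path of length `t` ending at `(n,m)` together with
the emitted observations. -/
def jointProb {A : Type} (pr : E → E → ℝ) (mu : E → ℝ) (f g : A → ℝ) (h : A → A → ℝ)
    (x y : ℕ → A) (t n m : ℕ) : ℝ :=
  ∑ u : Fin t → E,
    if Nn (extPath u) t = n ∧ Mm (extPath u) t = m then
      pathProb pr mu u * emit f g h x y (extPath u) 0 t
    else 0

/-- `Q_θ(x_{1:n}, y_{1:m}) = Σ_{e ∈ E_{n,m}} P_θ(ε_{1:|e|} = e, x_{1:n}, y_{1:m})`: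
all hidden paths ending at `(n,m)` have length ≤ n+m. -/
def Qprob {A : Type} (pr : E → E → ℝ) (mu : E → ℝ) (f g : A → ℝ) (h : A → A → ℝ)
    (x y : ℕ → A) (n m : ℕ) : ℝ :=
  ∑ l ∈ Finset.range (n + m + 1), jointProb pr mu f g h x y l n m

/-- `P_θ(Z_t = (n,m))`. -/
def walkProb (pr : E → E → ℝ) (mu : E → ℝ) (t n m : ℕ) : ℝ :=
  ∑ u : Fin t → E,
    if Nn (extPath u) t = n ∧ Mm (extPath u) t = m then pathProb pr mu u else 0

/-- `P_θ(∃ s ≥ 1, Z_s = (n,m))` (the walk is strictly increasing in `n+m`, so the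
events for different path lengths are disjoint and the probability is a sum). -/
def hitProb (pr : E → E → ℝ) (mu : E → ℝ) (n m : ℕ) : ℝ :=
  ∑ l ∈ Finset.Icc 1 (n + m), walkProb pr mu l n m

end


/-- `P(X_{N_s+1:N_t}, Y_{M_s+1:M_t} | ε_{s+1} = e)`: conditional probability, given that
the `(s+1)`-th hidden step is `e`, that the next `t − s` hidden steps emit exactly the
observed segments (which are determined by the realized hidden path `ω` and the observation
streams `x, y`).  The sum runs over all hidden path segments of length `t − s` starting at
`e` whose steps sum to `(N_t − N_s, M_t − M_s)`. -/
noncomputable def segProb {A : Type} (pr : E → E → ℝ) (f g : A → ℝ) (h : A → A → ℝ)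
    (x y : ℕ → A) (ω : ℕ → E) (s t : ℕ) (e : E) : ℝ :=
  ∑ v : Fin (t - s) → E,
    if extPath v 0 = e ∧ Nn (extPath v) (t - s) = Nn ω t - Nn ω s
        ∧ Mm (extPath v) (t - s) = Mm ω t - Mm ω s then
      (∏ i ∈ Finset.range (t - s - 1), pr (extPath v i) (extPath v (i + 1))) *
        emit f g h (fun i => x (Nn ω s + i)) (fun j => y (Mm ω s + j)) (extPath v) 0 (t - s)
    else 0

/-- The auxiliary process `W_{s,t} = max_{e ∈ E} log P(X_{N_s+1:N_t}, Y_{M_s+1:M_t} | ε_{s+1} = e) + log δ_θ`. -/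
noncomputable def Wproc {A : Type} (pr : E → E → ℝ) (f g : A → ℝ) (h : A → A → ℝ)
    (x y : ℕ → A) (ω : ℕ → E) (δθ : ℝ) (s t : ℕ) : ℝ :=
  Real.log (⨆ e : E, segProb pr f g h x y ω s t e) + Real.log δθ

section Helpers

lemma Nn_zero (a : ℕ → E) : Nn a 0 = 0 := by simp [Nn]

lemma Mm_zero (a : ℕ → E) : Mm a 0 = 0 := by simp [Mm]

lemma Nn_congr {a b : ℕ → E} {i : ℕ} (hab : ∀ j < i, a j = b j) : Nn a i = Nn b i :=
  Finset.sum_congr rfl fun j hj => by rw [hab j (Finset.mem_range.mp hj)]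

lemma Mm_congr {a b : ℕ → E} {i : ℕ} (hab : ∀ j < i, a j = b j) : Mm a i = Mm b i :=
  Finset.sum_congr rfl fun j hj => by rw [hab j (Finset.mem_range.mp hj)]

lemma Nn_add (a : ℕ → E) (s k : ℕ) :
    Nn a (s + k) = Nn a s + ∑ i ∈ Finset.range k, (stepv (a (s + i))).1 := by
  unfold Nn; rw [Finset.sum_range_add]

lemma Mm_add (a : ℕ → E) (s k : ℕ) :
    Mm a (s + k) = Mm a s + ∑ i ∈ Finset.range k, (stepv (a (s + i))).2 := by
  unfold Mm; rw [Finset.sum_range_add]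

lemma Nn_mono (a : ℕ → E) {s t : ℕ} (hle : s ≤ t) : Nn a s ≤ Nn a t :=
  Finset.sum_le_sum_of_subset (Finset.range_subset_range.mpr hle)

lemma Mm_mono (a : ℕ → E) {s t : ℕ} (hle : s ≤ t) : Mm a s ≤ Mm a t :=
  Finset.sum_le_sum_of_subset (Finset.range_subset_range.mpr hle)

lemma emit_pos {A : Type} {f g : A → ℝ} {h : A → A → ℝ}
    (hf : ∀ a, 0 < f a) (hg : ∀ a, 0 < g a) (hh : ∀ a b, 0 < h a b)
    (x y : ℕ → A) (u : ℕ → E) (s t : ℕ) : 0 < emit f g h x y u s t := by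
  unfold emit
  exact Finset.prod_pos fun i _ => by split_ifs <;> first | exact hf _ | exact hg _ | exact hh _ _

lemma trans_pos {pr : E → E → ℝ} (hpr : ∀ e e', 0 < pr e e') (a : ℕ → E) (n : ℕ) :
    0 < ∏ i ∈ Finset.range n, pr (a i) (a (i + 1)) :=
  Finset.prod_pos fun i _ => hpr _ _

/-- Concatenation of two finite hidden paths (as an infinite path). -/
def concAux {s k : ℕ} (u : Fin s → E) (v : Fin k → E) : ℕ → E :=
  fun j => if j < s then extPath u j else extPath v (j - s)

/-- Concatenation of two finite hidden paths. -/
def conc {s t : ℕ} (hst : s ≤ t) (u : Fin s → E) (v : Fin (t - s) → E) : Fin t → E :=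
  fun i => concAux u v (i : ℕ)

lemma extPath_conc {s t : ℕ} (hst : s ≤ t) (u : Fin s → E) (v : Fin (t - s) → E) (j : ℕ) :
    extPath (conc hst u v) j = if j < s then extPath u j else extPath v (j - s) := by
  by_cases h1 : j < t
  · show (if h : j < t then conc hst u v ⟨j, h⟩ else 0) = _
    rw [dif_pos h1]
    rfl
  · show (if h : j < t then conc hst u v ⟨j, h⟩ else 0) = _
    rw [dif_neg h1, if_neg (by omega)]
    show (0 : E) = extPath v (j - s)
    unfold extPath
    rw [dif_neg (by omega)]

lemma conc_inj {s t : ℕ} (hst : s ≤ t) : Function.Injective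
    (fun p : (Fin s → E) × (Fin (t - s) → E) => conc hst p.1 p.2) := by
  rintro ⟨u, v⟩ ⟨u', v'⟩ hpq
  simp only at hpq
  have hE : ∀ j, extPath (conc hst u v) j = extPath (conc hst u' v') j := fun j => by
    rw [hpq]
  simp only [Prod.mk.injEq]
  constructor
  · funext i
    have h1 := hE (i : ℕ)
    rw [extPath_conc, extPath_conc, if_pos i.isLt, if_pos i.isLt] at h1
    unfold extPath at h1
    rw [dif_pos i.isLt, dif_pos i.isLt] at h1
    simpa using h1
  · funext i
    have h1 := hE (s + (i : ℕ))
    rw [extPath_conc, extPath_conc, if_neg (by omega), if_neg (by omega),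
      Nat.add_sub_cancel_left] at h1
    unfold extPath at h1
    rw [dif_pos i.isLt, dif_pos i.isLt] at h1
    simpa using h1

lemma sum_concat_le {s t : ℕ} (hst : s ≤ t) (Au : (Fin s → E) → ℝ)
    (Bv : (Fin (t - s) → E) → ℝ) (Cw : (Fin t → E) → ℝ) (hC : ∀ w, 0 ≤ Cw w)
    (key : ∀ u v, Au u * Bv v ≤ Cw (conc hst u v)) :
    (∑ u, Au u) * (∑ v, Bv v) ≤ ∑ w, Cw w := by
  calc (∑ u, Au u) * (∑ v, Bv v)
      = ∑ p : (Fin s → E) × (Fin (t - s) → E), Au p.1 * Bv p.2 := by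
        rw [Finset.sum_mul_sum, ← Fintype.sum_prod_type']
    _ ≤ ∑ p : (Fin s → E) × (Fin (t - s) → E), Cw (conc hst p.1 p.2) :=
        Finset.sum_le_sum fun p _ => key p.1 p.2
    _ = ∑ w ∈ Finset.univ.image (fun p : (Fin s → E) × (Fin (t - s) → E) => conc hst p.1 p.2),
          Cw w := (Finset.sum_image fun p _ q _ hpq => conc_inj hst hpq).symm
    _ ≤ ∑ w, Cw w :=
        Finset.sum_le_sum_of_subset_of_nonneg (Finset.subset_univ _) fun w _ _ => hC w

lemma sum_concat_le' {s t : ℕ} (hst : s ≤ t) (c : ℝ) (Au : (Fin s → E) → ℝ)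
    (Bv : (Fin (t - s) → E) → ℝ) (Cw : (Fin t → E) → ℝ) (hC : ∀ w, 0 ≤ Cw w)
    (key : ∀ u v, c * Au u * Bv v ≤ Cw (conc hst u v)) :
    c * (∑ u, Au u) * (∑ v, Bv v) ≤ ∑ w, Cw w := by
  have h1 : (∑ u, c * Au u) * (∑ v, Bv v) ≤ ∑ w, Cw w :=
    sum_concat_le hst (fun u => c * Au u) Bv Cw hC key
  calc c * (∑ u, Au u) * (∑ v, Bv v) = (∑ u, c * Au u) * (∑ v, Bv v) := by
        rw [← Finset.mul_sum]
    _ ≤ ∑ w, Cw w := h1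

lemma segProb_pos {A : Type} (pr : E → E → ℝ) (f g : A → ℝ) (h : A → A → ℝ)
    (hpr : ∀ e e', 0 < pr e e') (hf : ∀ a, 0 < f a) (hg : ∀ a, 0 < g a)
    (hh : ∀ a b, 0 < h a b) (x y : ℕ → A) (ω : ℕ → E) (s t : ℕ) (hst : s < t) :
    0 < segProb pr f g h x y ω s t (ω s) := by
  have hk : 0 < t - s := by omega
  set v0 : Fin (t - s) → E := fun i => ω (s + (i : ℕ)) with hv0
  have hext : ∀ j < t - s, extPath v0 j = ω (s + j) := by
    intro j hj; unfold extPath; rw [dif_pos hj]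
  have hN : Nn (extPath v0) (t - s) = Nn ω t - Nn ω s := by
    have h1 : Nn ω t = Nn ω s + ∑ i ∈ Finset.range (t - s), (stepv (ω (s + i))).1 := by
      conv_lhs => rw [show t = s + (t - s) by omega]
      exact Nn_add ω s (t - s)
    have h2 : Nn (extPath v0) (t - s) = ∑ i ∈ Finset.range (t - s), (stepv (ω (s + i))).1 :=
      Finset.sum_congr rfl fun i hi => by rw [hext i (Finset.mem_range.mp hi)]
    omega
  have hM : Mm (extPath v0) (t - s) = Mm ω t - Mm ω s := by
    have h1 : Mm ω t = Mm ω s + ∑ i ∈ Finset.range (t - s), (stepv (ω (s + i))).2 := by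
      conv_lhs => rw [show t = s + (t - s) by omega]
      exact Mm_add ω s (t - s)
    have h2 : Mm (extPath v0) (t - s) = ∑ i ∈ Finset.range (t - s), (stepv (ω (s + i))).2 :=
      Finset.sum_congr rfl fun i hi => by rw [hext i (Finset.mem_range.mp hi)]
    omega
  have hcond : extPath v0 0 = ω s ∧ Nn (extPath v0) (t - s) = Nn ω t - Nn ω s
      ∧ Mm (extPath v0) (t - s) = Mm ω t - Mm ω s := by
    refine ⟨?_, hN, hM⟩
    rw [hext 0 hk, Nat.add_zero]
  unfold segProb
  refine lt_of_lt_of_le ?_ (Finset.single_le_sum (f := fun v : Fin (t - s) → E =>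
    if extPath v 0 = ω s ∧ Nn (extPath v) (t - s) = Nn ω t - Nn ω s
        ∧ Mm (extPath v) (t - s) = Mm ω t - Mm ω s then
      (∏ i ∈ Finset.range (t - s - 1), pr (extPath v i) (extPath v (i + 1))) *
        emit f g h (fun i => x (Nn ω s + i)) (fun j => y (Mm ω s + j)) (extPath v) 0 (t - s)
    else 0) (fun v _ => ?_) (Finset.mem_univ v0))
  · rw [if_pos hcond]
    exact mul_pos (trans_pos hpr _ _) (emit_pos hf hg hh _ _ _ _ _)
  · split_ifs
    · exact le_of_lt (mul_pos (trans_pos hpr _ _) (emit_pos hf hg hh _ _ _ _ _))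
    · exact le_rfl

lemma seg_mul_le {A : Type} (pr : E → E → ℝ) (f g : A → ℝ) (h : A → A → ℝ)
    (hpr : ∀ e e', 0 < pr e e') (hf : ∀ a, 0 < f a) (hg : ∀ a, 0 < g a)
    (hh : ∀ a b, 0 < h a b) (δθ : ℝ) (hδ0 : 0 ≤ δθ) (hδle : ∀ e e', δθ ≤ pr e e')
    (x y : ℕ → A) (ω : ℕ → E) (s t : ℕ) (h0 : 0 < s) (hst : s < t) (e e' : E) :
    δθ * segProb pr f g h x y ω 0 s e * segProb pr f g h x y ω s t e'
      ≤ segProb pr f g h x y ω 0 t e := by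
  have hle : s ≤ t := hst.le
  have hN0 : Nn ω 0 = 0 := Nn_zero ω
  have hM0 : Mm ω 0 = 0 := Mm_zero ω
  unfold segProb
  simp only [Nat.sub_zero]
  refine sum_concat_le' hle δθ _ _ _ (fun w => ?_) (fun u v => ?_)
  · split_ifs
    · exact le_of_lt (mul_pos (trans_pos hpr _ _) (emit_pos hf hg hh _ _ _ _ _))
    · exact le_rfl
  · by_cases hu : extPath u 0 = e ∧ Nn (extPath u) s = Nn ω s - Nn ω 0
        ∧ Mm (extPath u) s = Mm ω s - Mm ω 0
    swap
    · rw [if_neg hu, mul_zero, zero_mul]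
      split_ifs
      · exact le_of_lt (mul_pos (trans_pos hpr _ _) (emit_pos hf hg hh _ _ _ _ _))
      · exact le_rfl
    by_cases hv : extPath v 0 = e' ∧ Nn (extPath v) (t - s) = Nn ω t - Nn ω s
        ∧ Mm (extPath v) (t - s) = Mm ω t - Mm ω s
    swap
    · rw [if_neg hv, mul_zero]
      split_ifs
      · exact le_of_lt (mul_pos (trans_pos hpr _ _) (emit_pos hf hg hh _ _ _ _ _))
      · exact le_rfl
    rw [if_pos hu, if_pos hv]
    set W : ℕ → E := extPath (conc hle u v) with hWdef
    obtain ⟨hu1, hu2, hu3⟩ := hu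
    obtain ⟨hv1, hv2, hv3⟩ := hv
    have hWj : ∀ j, W j = if j < s then extPath u j else extPath v (j - s) :=
      extPath_conc hle u v
    have hWlt : ∀ j, j < s → W j = extPath u j := fun j hj => by rw [hWj j, if_pos hj]
    have hWge : ∀ j, W (s + j) = extPath v j := fun j => by
      rw [hWj (s + j), if_neg (by omega), Nat.add_sub_cancel_left]
    have hNu : ∀ i, i ≤ s → Nn W i = Nn (extPath u) i := fun i hi =>
      Nn_congr fun j hj => hWlt j (by omega)
    have hMu : ∀ i, i ≤ s → Mm W i = Mm (extPath u) i := fun i hi =>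
      Mm_congr fun j hj => hWlt j (by omega)
    have hNus : Nn (extPath u) s = Nn ω s := by omega
    have hMus : Mm (extPath u) s = Mm ω s := by omega
    have hNv : ∀ i, Nn W (s + i) = Nn ω s + Nn (extPath v) i := by
      intro i
      rw [Nn_add, hNu s le_rfl, hNus]
      congr 1
      exact Finset.sum_congr rfl fun j _ => by rw [hWge j]
    have hMv : ∀ i, Mm W (s + i) = Mm ω s + Mm (extPath v) i := by
      intro i
      rw [Mm_add, hMu s le_rfl, hMus]
      congr 1
      exact Finset.sum_congr rfl fun j _ => by rw [hWge j]
    have hNWt : Nn W t = Nn ω t := by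
      have h1 := hNv (t - s)
      rw [show s + (t - s) = t by omega] at h1
      have h2 := Nn_mono ω hle
      omega
    have hMWt : Mm W t = Mm ω t := by
      have h1 := hMv (t - s)
      rw [show s + (t - s) = t by omega] at h1
      have h2 := Mm_mono ω hle
      omega
    have hcw : W 0 = e ∧ Nn W t = Nn ω t - Nn ω 0 ∧ Mm W t = Mm ω t - Mm ω 0 :=
      ⟨by rw [hWlt 0 h0, hu1], by omega, by omega⟩
    rw [if_pos hcw]
    have hPw : (∏ i ∈ Finset.range (t - 1), pr (W i) (W (i + 1)))
        = ((∏ i ∈ Finset.range (s - 1), pr (extPath u i) (extPath u (i + 1))) *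
            pr (W (s - 1)) (W s)) *
          (∏ i ∈ Finset.range (t - s - 1), pr (extPath v i) (extPath v (i + 1))) := by
      rw [show t - 1 = s + (t - s - 1) by omega, Finset.prod_range_add]
      congr 1
      · conv_lhs => rw [show s = s - 1 + 1 by omega, Finset.prod_range_succ]
        congr 1
        · exact Finset.prod_congr rfl fun i hi => by
            have hi' := Finset.mem_range.mp hi
            rw [hWlt i (by omega), hWlt (i + 1) (by omega)]
        · rw [show s - 1 + 1 = s by omega]
      · exact Finset.prod_congr rfl fun i _ => by
          rw [hWge i, show s + i + 1 = s + (i + 1) by omega, hWge (i + 1)]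
    have hEw : emit f g h (fun i => x (Nn ω 0 + i)) (fun j => y (Mm ω 0 + j)) W 0 t
        = emit f g h (fun i => x (Nn ω 0 + i)) (fun j => y (Mm ω 0 + j)) (extPath u) 0 s *
          emit f g h (fun i => x (Nn ω s + i)) (fun j => y (Mm ω s + j)) (extPath v) 0 (t - s) := by
      simp only [emit, ← Finset.range_eq_Ico]
      conv_lhs => rw [show t = s + (t - s) by omega, Finset.prod_range_add]
      congr 1
      · refine Finset.prod_congr rfl fun i hi => ?_
        have hi' := Finset.mem_range.mp hi
        rw [hWlt i hi', hNu i hi'.le, hMu i hi'.le]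
      · refine Finset.prod_congr rfl fun i _ => ?_
        rw [hWge i, hNv i, hMv i, hN0, hM0]
        simp only [zero_add]
    rw [hPw, hEw]
    have hPu := trans_pos hpr (extPath u) (s - 1)
    have hPv := trans_pos hpr (extPath v) (t - s - 1)
    have hEu := emit_pos hf hg hh (fun i => x (Nn ω 0 + i)) (fun j => y (Mm ω 0 + j))
      (extPath u) 0 s
    have hEv := emit_pos hf hg hh (fun i => x (Nn ω s + i)) (fun j => y (Mm ω s + j))
      (extPath v) 0 (t - s)
    have hm : δθ ≤ pr (W (s - 1)) (W s) := hδle _ _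
    nlinarith [mul_le_mul_of_nonneg_right hm
        (le_of_lt (mul_pos (mul_pos hPu hPv) (mul_pos hEu hEv))),
      mul_pos hPu hEu, mul_pos hPv hEv]

end Helpers

/-- **superadditivity of the auxiliary process.** For a pair-HMM with
parameter in `Θ_0` (all transition and emission probabilities strictly positive), with
`δ_θ = min_{e,e'} π(e,e') > 0`, the process
`W_{s,t} = max_e log P(X_{N_s+1:N_t}, Y_{M_s+1:M_t} | ε_{s+1}=e) + log δ_θ` satisfies
`W_{0,t} ≥ W_{0,s} + W_{s,t}` for all `0 ≤ s < t`. -/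
theorem W_superadditive {A : Type} [Fintype A]
    (pr : E → E → ℝ) (mu : E → ℝ) (f g : A → ℝ) (h : A → A → ℝ)
    (hpr : ∀ e e', 0 < pr e e') (hmu : ∀ e, 0 < mu e)
    (hf : ∀ a, 0 < f a) (hg : ∀ a, 0 < g a) (hh : ∀ a b, 0 < h a b)
    (hprsum : ∀ e, ∑ e', pr e e' = 1) (hmusum : ∑ e, mu e = 1)
    (hfsum : ∑ a, f a = 1) (hgsum : ∑ a, g a = 1) (hhsum : ∑ a, ∑ b, h a b = 1)
    (δθ : ℝ) (hδθ : δθ = ⨅ p : E × E, pr p.1 p.2)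
    (ω : ℕ → E) (x y : ℕ → A) (s t : ℕ) (hst : s < t) :
    Wproc pr f g h x y ω δθ 0 s + Wproc pr f g h x y ω δθ s t
      ≤ Wproc pr f g h x y ω δθ 0 t := by
  have hbdd : ∀ s t : ℕ, BddAbove (Set.range fun e : E => segProb pr f g h x y ω s t e) :=
    fun s t => Set.Finite.bddAbove (Set.finite_range _)
  have hδle : ∀ e e', δθ ≤ pr e e' := fun e e' => by
    rw [hδθ]
    exact ciInf_le (Set.Finite.bddBelow (Set.finite_range _)) (e, e')
  have hδpos : 0 < δθ := by
    obtain ⟨p0, hp0⟩ := Finite.exists_min fun p : E × E => pr p.1 p.2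
    have h1 : pr p0.1 p0.2 ≤ δθ := by rw [hδθ]; exact le_ciInf hp0
    exact lt_of_lt_of_le (hpr _ _) h1
  have hδ1 : δθ ≤ 1 := by
    refine le_trans (hδle 0 0) ?_
    rw [← hprsum 0]
    exact Finset.single_le_sum (fun e _ => (hpr 0 e).le) (Finset.mem_univ 0)
  rcases Nat.eq_zero_or_pos s with hs0 | hs
  · subst hs0
    have hseg : ∀ e : E, segProb pr f g h x y ω 0 0 e = if (0 : E) = e then 1 else 0 := by
      intro e
      unfold segProb
      simp only [Nat.sub_zero]
      rw [Fintype.sum_unique]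
      simp [extPath, Nn, Mm, emit]
    have hsup : (⨆ e : E, segProb pr f g h x y ω 0 0 e) = 1 := by
      apply le_antisymm
      · refine ciSup_le fun e => ?_
        rw [hseg e]; split_ifs <;> norm_num
      · have h1 := le_ciSup (hbdd 0 0) (0 : E)
        rw [hseg 0, if_pos rfl] at h1
        exact h1
    have hW00 : Wproc pr f g h x y ω δθ 0 0 = Real.log δθ := by
      unfold Wproc; rw [hsup, Real.log_one, zero_add]
    rw [hW00]
    have hlog : Real.log δθ ≤ 0 := Real.log_nonpos hδpos.le hδ1
    linarith
  · obtain ⟨e1, he1⟩ := Finite.exists_max fun e : E => segProb pr f g h x y ω 0 s e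
    obtain ⟨e2, he2⟩ := Finite.exists_max fun e : E => segProb pr f g h x y ω s t e
    have hsup1 : (⨆ e : E, segProb pr f g h x y ω 0 s e) = segProb pr f g h x y ω 0 s e1 :=
      le_antisymm (ciSup_le he1) (le_ciSup (hbdd 0 s) e1)
    have hsup2 : (⨆ e : E, segProb pr f g h x y ω s t e) = segProb pr f g h x y ω s t e2 :=
      le_antisymm (ciSup_le he2) (le_ciSup (hbdd s t) e2)
    have hS1 : 0 < segProb pr f g h x y ω 0 s e1 :=
      lt_of_lt_of_le (segProb_pos pr f g h hpr hf hg hh x y ω 0 s hs) (he1 (ω 0))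
    have hS2 : 0 < segProb pr f g h x y ω s t e2 :=
      lt_of_lt_of_le (segProb_pos pr f g h hpr hf hg hh x y ω s t hst) (he2 (ω s))
    have hmain : δθ * segProb pr f g h x y ω 0 s e1 * segProb pr f g h x y ω s t e2
        ≤ ⨆ e : E, segProb pr f g h x y ω 0 t e :=
      le_trans (seg_mul_le pr f g h hpr hf hg hh δθ hδpos.le hδle x y ω s t hs hst e1 e2)
        (le_ciSup (hbdd 0 t) e1)
    have hprodpos : 0 < δθ * segProb pr f g h x y ω 0 s e1 * segProb pr f g h x y ω s t e2 :=
      mul_pos (mul_pos hδpos hS1) hS2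
    have hlogle := Real.log_le_log hprodpos hmain
    rw [Real.log_mul (by positivity) (ne_of_gt hS2),
      Real.log_mul (ne_of_gt hδpos) (ne_of_gt hS1)] at hlogle
    unfold Wproc
    rw [hsup1, hsup2]
    linarith
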